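/- Let f : X → ℝ ∪ {+∞} be a proper lower semicontinuous convex function on a Banach space and τ > 0, with −∞ < α < β ≤ +∞. If dist(0, ∂f(x)) ≥ 1/τ for all x with α < f(x) < β, then τ(f(x) − α) ≥ dist(x, {f ≤ α}) for all x with α < f(x) < β. -/

import Mathlib

open Topology
open scoped ENNReal
open Filter

set_option maxHeartbeats 1000000

lemma ekeland_aux {X : Type*} [MetricSpace X] [CompleteSpace X]
    (g : X → ℝ≥0∞) (hg : LowerSemicontinuous g) (K : ℝ≥0∞) (hK0 : K ≠ 0) (hKt : K ≠ ⊤)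
    (x : X) (hx : g x ≠ ⊤) :
    ∃ y, g y + K * edist y x ≤ g x ∧ ∀ z, g y ≤ g z + K * edist z y := by
  set P : X → X → Prop := fun z w => g z + K * edist z w ≤ g w with hP
  have hrefl : ∀ w, P w w := fun w => by simp [hP]
  have htrans : ∀ {z w v}, P z w → P w v → P z v := by
    intro z w v h1 h2
    have h3 : g z + K * edist z v ≤ g z + K * (edist z w + edist w v) := by
      gcongr; exact edist_triangle _ _ _
    calc g z + K * edist z v ≤ g z + K * (edist z w + edist w v) := h3
      _ = (g z + K * edist z w) + K * edist w v := by ring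
      _ ≤ g w + K * edist w v := by gcongr
      _ ≤ g v := h2
  have hgle : ∀ {z w}, P z w → g z ≤ g w := fun h => le_trans (self_le_add_right _ _) h
  set A : X → ℝ≥0∞ := fun w => ⨅ v, ⨅ (_ : P v w), g v with hA
  have hAle : ∀ {z w}, P z w → A w ≤ g z := fun {z w} h => biInf_le _ h
  have hex : ∀ (n : ℕ) (w : X), ∃ z, P z w ∧ g z ≤ A w + 2⁻¹ ^ n := by
    intro n w
    have hpow : (2⁻¹ : ℝ≥0∞) ^ n ≠ 0 := by simp
    by_cases hAt : A w = ⊤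
    · exact ⟨w, hrefl w, by simp [hAt]⟩
    · have hlt : A w < A w + 2⁻¹ ^ n := ENNReal.lt_add_right hAt hpow
      rw [hA] at hlt
      simp only [iInf_lt_iff] at hlt
      obtain ⟨v, hv, hlt⟩ := hlt
      exact ⟨v, hv, hlt.le⟩
  choose F hF1 hF2 using hex
  set seq : ℕ → X := fun n => Nat.rec x (fun n xn => F n xn) n with hseq
  have hseq0 : seq 0 = x := rfl
  have hPn : ∀ n, P (seq (n + 1)) (seq n) := fun n => hF1 n (seq n)
  have hFn : ∀ n, g (seq (n + 1)) ≤ A (seq n) + 2⁻¹ ^ n := fun n => hF2 n (seq n)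
  have hmono : ∀ n m, n ≤ m → P (seq m) (seq n) := by
    intro n m hnm
    induction m, hnm using Nat.le_induction with
    | base => exact hrefl _
    | succ m hnm ih => exact htrans (hPn m) ih
  have hgx : ∀ n, g (seq n) ≤ g x := fun n => hseq0 ▸ hgle (hmono 0 n (Nat.zero_le n))
  set d : ℕ → ℝ≥0∞ := fun n => edist (seq n) (seq (n + 1)) with hd
  have hsum : ∀ N, K * (∑ i ∈ Finset.range N, d i) + g (seq N) ≤ g x := by
    intro N
    induction N with
    | zero => simp [hseq0]
    | succ N ih =>
      rw [Finset.sum_range_succ, mul_add]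
      have h0 : g (seq (N + 1)) + K * edist (seq (N + 1)) (seq N) ≤ g (seq N) := hPn N
      have h1 : K * d N + g (seq (N + 1)) ≤ g (seq N) := by
        have he : d N = edist (seq (N + 1)) (seq N) := edist_comm _ _
        rw [he]
        calc K * edist (seq (N + 1)) (seq N) + g (seq (N + 1))
            = g (seq (N + 1)) + K * edist (seq (N + 1)) (seq N) := by ring
          _ ≤ g (seq N) := h0
      calc K * ∑ i ∈ Finset.range N, d i + K * d N + g (seq (N + 1))
          = K * ∑ i ∈ Finset.range N, d i + (K * d N + g (seq (N + 1))) := by ring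
        _ ≤ K * ∑ i ∈ Finset.range N, d i + g (seq N) := by gcongr
        _ ≤ g x := ih
  have htsum : (∑' n, d n) ≠ ⊤ := by
    intro hT
    have h1 : K * (∑' n, d n) ≤ g x := by
      rw [ENNReal.tsum_eq_iSup_sum, ENNReal.mul_iSup]
      refine iSup_le fun s => ?_
      obtain ⟨N, hN⟩ := s.exists_nat_subset_range
      calc K * ∑ i ∈ s, d i ≤ K * ∑ i ∈ Finset.range N, d i :=
            mul_le_mul_right (Finset.sum_le_sum_of_subset hN) K
        _ ≤ K * ∑ i ∈ Finset.range N, d i + g (seq N) := self_le_add_right _ _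
        _ ≤ g x := hsum N
    rw [hT, ENNReal.mul_top hK0] at h1
    exact hx (top_le_iff.mp h1)
  have hcauchy : CauchySeq seq := cauchySeq_of_edist_le_of_tsum_ne_top d (fun n => le_rfl) htsum
  obtain ⟨y, hy⟩ := cauchySeq_tendsto_of_complete hcauchy
  have hgyn : ∀ n, g y ≤ g (seq n) := by
    intro n
    refine le_of_forall_lt fun c hc => ?_
    have h2 : ∀ᶠ m in atTop, c < g (seq m) := hy.eventually (hg y c hc)
    obtain ⟨m, hm, hm2⟩ := (h2.and (eventually_ge_atTop n)).exists
    exact lt_of_lt_of_le hm (hgle (hmono n m hm2))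
  have hgy : g y ≤ g x := hseq0 ▸ hgyn 0
  have hgyt : g y ≠ ⊤ := fun h => hx (top_le_iff.mp (h ▸ hgy))
  have hPy : ∀ n, P y (seq n) := by
    intro n
    show g y + K * edist y (seq n) ≤ g (seq n)
    refine ENNReal.le_of_forall_pos_le_add fun ε hε hfin => ?_
    have hε' : (ε : ℝ≥0∞) ≠ 0 := by exact_mod_cast hε.ne'
    set εh : ℝ≥0∞ := ε / 2 with hεh
    have hεh0 : εh ≠ 0 := by simp [hεh, ENNReal.div_eq_zero_iff, hε']
    set δ : ℝ≥0∞ := εh / K with hδ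
    have hKδ : K * δ = εh := ENNReal.mul_div_cancel hK0 hKt
    have hδ0 : δ ≠ 0 := by simp [hδ, ENNReal.div_eq_zero_iff, hεh0, hKt]
    have hev1 : ∀ᶠ m in atTop, g y ≤ g (seq m) + εh := by
      by_cases hc : g y ≤ εh
      · exact Eventually.of_forall fun m => hc.trans le_add_self
      · push_neg at hc
        have hgy0 : g y ≠ 0 := ((zero_le).trans_lt hc).ne'
        have hc' : g y - εh < g y := ENNReal.sub_lt_self hgyt hgy0 hεh0
        filter_upwards [hy.eventually (hg y (g y - εh) hc')] with m hm
        calc g y ≤ (g y - εh) + εh := le_tsub_add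
          _ ≤ g (seq m) + εh := by gcongr
    have hev2 : ∀ᶠ m in atTop, edist y (seq n) ≤ edist (seq m) (seq n) + δ := by
      have ht : Tendsto (fun m => edist (seq m) (seq n)) atTop (𝓝 (edist y (seq n))) :=
        hy.edist tendsto_const_nhds
      have hmem : Set.Icc (edist y (seq n) - δ) (edist y (seq n) + δ) ∈ 𝓝 (edist y (seq n)) :=
        ENNReal.Icc_mem_nhds (edist_ne_top _ _) hδ0
      filter_upwards [ht.eventually_mem hmem] with m hm
      calc edist y (seq n) ≤ (edist y (seq n) - δ) + δ := le_tsub_add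
        _ ≤ edist (seq m) (seq n) + δ := by gcongr; exact hm.1
    obtain ⟨m, hm1, hm2, hm3⟩ := (hev1.and (hev2.and (eventually_ge_atTop n))).exists
    have hPmn : g (seq m) + K * edist (seq m) (seq n) ≤ g (seq n) := hmono n m hm3
    calc g y + K * edist y (seq n) ≤ (g (seq m) + εh) + K * (edist (seq m) (seq n) + δ) := by
          gcongr
      _ = (g (seq m) + K * edist (seq m) (seq n)) + (εh + K * δ) := by ring
      _ ≤ g (seq n) + (εh + εh) := by rw [hKδ]; gcongr
      _ = g (seq n) + ε := by rw [hεh, ENNReal.add_halves]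
  refine ⟨y, hseq0 ▸ hPy 0, ?_⟩
  intro z
  by_contra hcon
  push_neg at hcon
  have hPzy : P z y := hcon.le
  have hgyz : g y ≤ g z := by
    refine ENNReal.le_of_forall_pos_le_add fun ε hε hfin => ?_
    obtain ⟨n, hn⟩ := ENNReal.exists_inv_two_pow_lt (show (ε : ℝ≥0∞) ≠ 0 by exact_mod_cast hε.ne')
    have hzn : P z (seq n) := htrans hPzy (hPy n)
    calc g y ≤ g (seq (n + 1)) := hgyn (n + 1)
      _ ≤ A (seq n) + 2⁻¹ ^ n := hFn n
      _ ≤ g z + ε := add_le_add (hAle hzn) hn.le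
  exact absurd (lt_of_lt_of_le hcon hgyz) (not_lt.mpr (self_le_add_right _ _))


lemma subgrad_of_ek {X : Type*} [NormedAddCommGroup X] [NormedSpace ℝ X]
    (f : X → EReal) (hlsc : LowerSemicontinuous f)
    (hconv : ∀ x y : X, ∀ a b : ℝ, 0 ≤ a → 0 ≤ b → a + b = 1 →
      f (a • x + b • y) ≤ (a : EReal) * f x + (b : EReal) * f y)
    (hbot : ∀ x, f x ≠ ⊥) (α : ℝ) (y : X) (hytop : f y ≠ ⊤) (hαy : (α : EReal) < f y)
    (Kr : ℝ) (hKr : 0 < Kr)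
    (hek : ∀ z t, f z ≤ ((t + α : ℝ) : EReal) → 0 ≤ t →
      (f y).toReal - α ≤ t + Kr * ‖z - y‖) :
    ∃ u : X →L[ℝ] ℝ, (∀ z, f y + ((u z - u y : ℝ) : EReal) ≤ f z) ∧ ‖u‖ ≤ Kr := by
  set r : ℝ := (f y).toReal - α with hrdef
  have hfy : f y = ((α + r : ℝ) : EReal) := by
    rw [hrdef]; ring_nf; exact (EReal.coe_toReal hytop (hbot y)).symm
  have hr : 0 < r := by
    have : (α : EReal) < ((α + r : ℝ) : EReal) := hfy ▸ hαy
    rw [EReal.coe_lt_coe_iff] at this; linarith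
  set A : Set (X × ℝ) := {p | f p.1 ≤ ((p.2 + α : ℝ) : EReal) ∧ 0 ≤ p.2} with hA
  set B : Set (X × ℝ) := {p | p.2 + Kr * ‖p.1 - y‖ < r} with hB
  -- convexity of A
  have hAconv : Convex ℝ A := by
    intro p hp q hq a b ha hb hab
    obtain ⟨hp1, hp2⟩ := hp
    obtain ⟨hq1, hq2⟩ := hq
    have hptop : f p.1 ≠ ⊤ := ne_top_of_le_ne_top (EReal.coe_ne_top _) hp1
    have hqtop : f q.1 ≠ ⊤ := ne_top_of_le_ne_top (EReal.coe_ne_top _) hq1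
    set sp : ℝ := (f p.1).toReal with hspdef
    set sq : ℝ := (f q.1).toReal with hsqdef
    have hfp : f p.1 = (sp : EReal) := (EReal.coe_toReal hptop (hbot _)).symm
    have hfq : f q.1 = (sq : EReal) := (EReal.coe_toReal hqtop (hbot _)).symm
    have hsp : sp ≤ p.2 + α := by rw [hfp, EReal.coe_le_coe_iff] at hp1; exact hp1
    have hsq : sq ≤ q.2 + α := by rw [hfq, EReal.coe_le_coe_iff] at hq1; exact hq1
    constructor
    · show f (a • p.1 + b • q.1) ≤ (((a • p + b • q).2 + α : ℝ) : EReal)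
      have h1 := hconv p.1 q.1 a b ha hb hab
      rw [hfp, hfq] at h1
      have h2 : (a : EReal) * (sp : EReal) + (b : EReal) * (sq : EReal)
          = ((a * sp + b * sq : ℝ) : EReal) := by
        rw [← EReal.coe_mul, ← EReal.coe_mul, ← EReal.coe_add]
      rw [h2] at h1
      refine h1.trans ?_
      rw [EReal.coe_le_coe_iff]
      have e1 : (a • p + b • q).2 = a * p.2 + b * q.2 := rfl
      rw [e1]
      have h5 : a * α + b * α = α := by rw [← add_mul, hab, one_mul]
      nlinarith [mul_le_mul_of_nonneg_left hsp ha, mul_le_mul_of_nonneg_left hsq hb, h5]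
    · show (0 : ℝ) ≤ (a • p + b • q).2
      have e1 : (a • p + b • q).2 = a * p.2 + b * q.2 := rfl
      rw [e1]; positivity
  -- convexity of B
  have hBconv : Convex ℝ B := by
    intro p hp q hq a b ha hb hab
    simp only [hB, Set.mem_setOf_eq] at hp hq ⊢
    have h1 : a • p.1 + b • q.1 - y = a • (p.1 - y) + b • (q.1 - y) := by
      rw [smul_sub, smul_sub, sub_add_sub_comm, ← add_smul, hab, one_smul]
    have hnorm : ‖(a • p + b • q).1 - y‖ ≤ a * ‖p.1 - y‖ + b * ‖q.1 - y‖ := by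
      have e1 : (a • p + b • q).1 = a • p.1 + b • q.1 := rfl
      rw [e1, h1]
      refine (norm_add_le _ _).trans ?_
      rw [norm_smul, norm_smul, Real.norm_of_nonneg ha, Real.norm_of_nonneg hb]
    have e2 : (a • p + b • q).2 = a * p.2 + b * q.2 := rfl
    rw [e2]
    rcases eq_or_lt_of_le ha with hae | ha'
    · have hb1 : b = 1 := by linarith
      have ha0 : a = 0 := hae.symm
      subst ha0; subst hb1
      simp only [zero_mul, one_mul, zero_add] at hnorm ⊢
      nlinarith [mul_le_mul_of_nonneg_left hnorm hKr.le]
    · have h2 : a * (p.2 + Kr * ‖p.1 - y‖) < a * r := by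
        exact mul_lt_mul_of_pos_left hp ha'
      have h3 : b * (q.2 + Kr * ‖q.1 - y‖) ≤ b * r := by
        exact mul_le_mul_of_nonneg_left hq.le hb
      have h4 : Kr * ‖(a • p + b • q).1 - y‖ ≤ Kr * (a * ‖p.1 - y‖ + b * ‖q.1 - y‖) :=
        mul_le_mul_of_nonneg_left hnorm hKr.le
      have h5 : a * r + b * r = r := by rw [← add_mul, hab, one_mul]
      nlinarith [h2, h3, h4, h5]
  have hBopen : IsOpen B := by
    have hc : Continuous fun p : X × ℝ => p.2 + Kr * ‖p.1 - y‖ :=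
      continuous_snd.add (continuous_const.mul ((continuous_fst.sub continuous_const).norm))
    exact isOpen_lt hc continuous_const
  have hdisj : Disjoint B A := by
    rw [Set.disjoint_left]
    rintro p hpB ⟨hp1, hp2⟩
    exact absurd (hek p.1 p.2 hp1 hp2) (not_le.mpr hpB)
  obtain ⟨φ, s₀, hφB, hφA⟩ := geometric_hahn_banach_open hBconv hBopen hAconv hdisj
  set ψ : X →L[ℝ] ℝ := φ.comp (ContinuousLinearMap.inl ℝ X ℝ) with hψ
  set c : ℝ := φ ((0 : X), (1 : ℝ)) with hc
  have hφzt : ∀ (z : X) (t : ℝ), φ (z, t) = ψ z + t * c := by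
    intro z t
    have h1 : (z, t) = ((z, (0:ℝ)) + t • ((0 : X), (1 : ℝ)) : X × ℝ) := by
      simp [Prod.ext_iff]
    rw [h1, map_add, map_smul]
    simp [hψ, hc, smul_eq_mul]
  have hAin : ∀ (z : X) (t : ℝ), f z ≤ ((t + α : ℝ) : EReal) → 0 ≤ t → s₀ ≤ ψ z + t * c := by
    intro z t h1 h2
    have := hφA (z, t) ⟨h1, h2⟩
    rwa [hφzt] at this
  have hBin : ∀ (z : X) (t : ℝ), t + Kr * ‖z - y‖ < r → ψ z + t * c < s₀ := by
    intro z t h1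
    have := hφB (z, t) h1
    rwa [hφzt] at this
  clear_value ψ c
  -- c > 0
  have hcnn : 0 ≤ c := by
    by_contra hcneg
    push_neg at hcneg
    obtain ⟨n, hn⟩ := exists_nat_gt ((ψ y + r * c - s₀) / (-c))
    have h1 : s₀ ≤ ψ y + (r + n) * c := by
      refine hAin y (r + n) ?_ (by positivity)
      rw [hfy, EReal.coe_le_coe_iff]; linarith [Nat.cast_nonneg (α := ℝ) n]
    rw [div_lt_iff₀ (by linarith : (0:ℝ) < -c)] at hn
    nlinarith
  have hcpos : 0 < c := by
    rcases eq_or_lt_of_le hcnn with he | h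
    · exfalso
      have h1 : s₀ ≤ ψ y + r * c := hAin y r (le_of_eq (hfy.trans (by rw [add_comm]))) hr.le
      have h2 : ψ y + (r - 1) * c < s₀ := by
        refine hBin y (r - 1) ?_
        simp [sub_self, norm_zero]
      rw [← he] at h1 h2
      simp only [mul_zero, add_zero] at h1 h2; linarith
    · exact h
  -- s₀ = ψ y + r * c
  have hBlim : ∀ z : X, ψ z + (r - Kr * ‖z - y‖) * c ≤ s₀ := by
    intro z
    by_contra hcon
    push_neg at hcon
    set gap : ℝ := ψ z + (r - Kr * ‖z - y‖) * c - s₀ with hgap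
    have hgappos : 0 < gap := by rw [hgap]; linarith
    set δ : ℝ := gap / (2 * c) with hδ
    have hδpos : 0 < δ := by positivity
    have hδc : δ * c = gap / 2 := by rw [hδ]; field_simp
    have h1 : ψ z + (r - Kr * ‖z - y‖ - δ) * c < s₀ := by
      refine hBin z (r - Kr * ‖z - y‖ - δ) (by linarith)
    nlinarith [h1]
  have hs₀ : s₀ = ψ y + r * c := by
    have h1 : s₀ ≤ ψ y + r * c := hAin y r (le_of_eq (hfy.trans (by rw [add_comm]))) hr.le
    have h2 : ψ y + r * c ≤ s₀ := by
      have := hBlim y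
      simpa [sub_self, norm_zero] using this
    linarith
  -- the subgradient
  set u : X →L[ℝ] ℝ := -(c⁻¹ • ψ) with hu
  have huz : ∀ z : X, u z = -(ψ z) / c := by
    intro z; simp [hu, div_eq_inv_mul]
  have hud : ∀ z : X, c * (u z - u y) = ψ y - ψ z := by
    intro z; rw [huz, huz]; field_simp; ring
  clear_value u
  refine ⟨u, ?_, ?_⟩
  · -- subgradient inequality
    intro z
    by_cases hztop : f z = ⊤
    · rw [hztop]; exact le_top
    · have hzbot := hbot z
      set sz : ℝ := (f z).toReal with hsz
      have hfz : f z = (sz : EReal) := (EReal.coe_toReal hztop hzbot).symm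
      by_cases hzα : (α : EReal) < f z
      · -- case f z > α
        have hszα : α < sz := by rw [hfz, EReal.coe_lt_coe_iff] at hzα; exact hzα
        have h1 : s₀ ≤ ψ z + (sz - α) * c := by
          refine hAin z (sz - α) ?_ (by linarith)
          rw [hfz, EReal.coe_le_coe_iff]; linarith
        rw [hs₀] at h1
        have h2 : c * (u z - u y + r) ≤ c * (sz - α) := by
          linarith [hud z, h1]
        have h3 : u z - u y + r ≤ sz - α := le_of_mul_le_mul_left h2 hcpos
        rw [hfy, hfz, ← EReal.coe_add, EReal.coe_le_coe_iff]
        linarith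
      · -- case f z ≤ α
        push_neg at hzα
        have hszα : sz ≤ α := by rw [hfz, EReal.coe_le_coe_iff] at hzα; exact hzα
        -- find small a with f ((1-a) • y + a • z) > α
        have hev : ∀ᶠ w in 𝓝 y, (α : EReal) < f w := hlsc y α hαy
        have hpath : Tendsto (fun a : ℝ => (1 - a) • y + a • z) (𝓝 0) (𝓝 y) := by
          have hcont : Continuous fun a : ℝ => (1 - a) • y + a • z :=
            ((continuous_const.sub continuous_id).smul continuous_const).add
              (continuous_id.smul continuous_const)
          have h0 := hcont.tendsto 0
          simp only [sub_zero, one_smul, zero_smul, add_zero] at h0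
          exact h0
        have hev2 : ∀ᶠ a : ℝ in 𝓝 0, (α : EReal) < f ((1 - a) • y + a • z) :=
          hpath.eventually hev
        have hev3 : ∀ᶠ a : ℝ in 𝓝[>] (0:ℝ), (α : EReal) < f ((1 - a) • y + a • z) :=
          nhdsWithin_le_nhds hev2
        have hev4 : ∀ᶠ a : ℝ in 𝓝[>] (0:ℝ), a < 1 :=
          nhdsWithin_le_nhds (Filter.Tendsto.eventually_lt_const (by norm_num) tendsto_id)
        have hev5 : ∀ᶠ a : ℝ in 𝓝[>] (0:ℝ), 0 < a := eventually_mem_nhdsWithin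
        obtain ⟨a, haα, ha1, ha0⟩ := (hev3.and (hev4.and hev5)).exists
        set w : X := (1 - a) • y + a • z with hw
        have hconvw := hconv y z (1 - a) a (by linarith) ha0.le (by ring)
        rw [hfy, hfz] at hconvw
        have h2 : ((1 - a : ℝ) : EReal) * ((α + r : ℝ) : EReal) + ((a : ℝ) : EReal) * ((sz : ℝ) : EReal)
            = (((1 - a) * (α + r) + a * sz : ℝ) : EReal) := by
          rw [← EReal.coe_mul, ← EReal.coe_mul, ← EReal.coe_add]
        rw [h2] at hconvw
        have hwtop : f w ≠ ⊤ := ne_top_of_le_ne_top (EReal.coe_ne_top _) hconvw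
        set sw : ℝ := (f w).toReal with hswdef
        have hfw : f w = (sw : EReal) := (EReal.coe_toReal hwtop (hbot _)).symm
        have hswle : sw ≤ (1 - a) * (α + r) + a * sz := by
          rw [hfw, EReal.coe_le_coe_iff] at hconvw; exact hconvw
        have hswα : α < sw := by
          rw [hfw, EReal.coe_lt_coe_iff] at haα; exact haα
        have h1 : s₀ ≤ ψ w + (sw - α) * c := by
          refine hAin w (sw - α) ?_ (by linarith)
          rw [hfw, EReal.coe_le_coe_iff]; linarith
        rw [hs₀] at h1
        have huw : u w = (1 - a) * u y + a * u z := by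
          rw [hw]; rw [map_add, map_smul, map_smul]; simp [smul_eq_mul]
        have h2' : c * (u w - u y + r) ≤ c * (sw - α) := by
          linarith [hud w, h1]
        have h3 : u w - u y + r ≤ sw - α := le_of_mul_le_mul_left h2' hcpos
        have h4 : u w - u y = a * (u z - u y) := by rw [huw]; ring
        rw [h4] at h3
        -- combine: α + r + a*(uz - uy) ≤ sw ≤ (1-a)(α+r) + a sz
        have h5 : a * (u z - u y) ≤ a * (sz - (α + r)) := by linarith [hswle]
        have h6 : u z - u y ≤ sz - (α + r) := le_of_mul_le_mul_left h5 ha0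
        rw [hfy, hfz, ← EReal.coe_add, EReal.coe_le_coe_iff]
        linarith
  · -- norm bound
    have hkey : ∀ w : X, u w ≤ Kr * ‖w‖ := by
      intro w
      have h1 := hBlim (y - w)
      rw [hs₀] at h1
      have he : ‖y - w - y‖ = ‖w‖ := by
        rw [show y - w - y = -w by abel, norm_neg]
      rw [he] at h1
      have h2 : c * (u y - u (y - w)) = ψ (y - w) - ψ y := by
        have := hud (y - w); linarith
      have h3 : u y - u (y - w) = u w := by rw [map_sub]; ring
      rw [h3] at h2
      have h4 : c * (u w) ≤ c * (Kr * ‖w‖) := by linarith [h1, h2]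
      exact le_of_mul_le_mul_left h4 hcpos
    refine u.opNorm_le_bound (by positivity) fun w => ?_
    rw [Real.norm_eq_abs, abs_le]
    constructor
    · have := hkey (-w)
      rw [map_neg, norm_neg] at this
      linarith
    · exact hkey w


-- Convexity for extended-real-valued functions.
def ERealConvexOn {X : Type*} [NormedAddCommGroup X] [NormedSpace ℝ X]
    (f : X → EReal) : Prop :=
  ∀ x y : X, ∀ a b : ℝ, 0 ≤ a → 0 ≤ b → a + b = 1 →
    f (a • x + b • y) ≤ (a : EReal) * f x + (b : EReal) * f y

theorem stmt12 {X : Type*} [NormedAddCommGroup X] [NormedSpace ℝ X] [CompleteSpace X]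
    (f : X → EReal) (hlsc : LowerSemicontinuous f) (hconv : ERealConvexOn f)
    (hproper : ∃ x, f x ≠ ⊤) (hbot : ∀ x, f x ≠ ⊥)
    (α : ℝ) (β : EReal) (hαβ : (α : EReal) < β) (τ : ℝ) (hτ : 0 < τ)
    (hsub : ∀ x, (α : EReal) < f x → f x < β →
      ENNReal.ofReal (1 / τ) ≤
        ⨅ u ∈ {u : X →L[ℝ] ℝ | ∀ y, f x + ((u y - u x : ℝ) : EReal) ≤ f y},
          (‖u‖₊ : ℝ≥0∞)) :
    ∀ x, (α : EReal) < f x → f x < β →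
      EMetric.infEdist x {y | f y ≤ (α : EReal)} ≤
        ENNReal.ofReal (τ * ((f x).toReal - α)) := by
  -- the ℝ≥0∞-valued excess function
  set g : X → ℝ≥0∞ := fun z => if f z = ⊤ then ⊤ else ENNReal.ofReal ((f z).toReal - α)
    with hg
  have hglt : ∀ (z : X) (t : ℝ), 0 ≤ t →
      (ENNReal.ofReal t < g z ↔ ((α + t : ℝ) : EReal) < f z) := by
    intro z t ht
    by_cases hz : f z = ⊤
    · simp only [hg, hz, if_pos]
      exact iff_of_true (ENNReal.ofReal_lt_top) (EReal.coe_lt_top _)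
    · have hfz : f z = (((f z).toReal : ℝ) : EReal) := (EReal.coe_toReal hz (hbot z)).symm
      simp only [hg, hz, if_neg, if_false]
      rw [ENNReal.ofReal_lt_ofReal_iff_of_nonneg ht]
      rw [hfz, EReal.coe_lt_coe_iff, EReal.toReal_coe]
      constructor <;> intro h <;> linarith
  have hgle : ∀ (z : X) (t : ℝ), 0 ≤ t →
      (g z ≤ ENNReal.ofReal t ↔ f z ≤ ((α + t : ℝ) : EReal)) := by
    intro z t ht
    rw [← not_lt, ← not_lt, not_iff_not]
    exact hglt z t ht
  have hglsc : LowerSemicontinuous g := by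
    intro z c hc
    have hct : c ≠ ⊤ := hc.ne_top
    have hc' : c = ENNReal.ofReal c.toReal := (ENNReal.ofReal_toReal hct).symm
    rw [hc'] at hc
    rw [gt_iff_lt, hglt z c.toReal ENNReal.toReal_nonneg] at hc
    filter_upwards [hlsc z _ hc] with w hw
    show c < g w
    rw [hc', hglt w c.toReal ENNReal.toReal_nonneg]
    exact hw
  -- main argument
  intro x hαx hxβ
  have hxtop : f x ≠ ⊤ := (hxβ.trans_le le_top).ne
  have hfx : f x = (((f x).toReal : ℝ) : EReal) := (EReal.coe_toReal hxtop (hbot x)).symm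
  set r₀ : ℝ := (f x).toReal - α with hr₀
  have hr₀pos : 0 < r₀ := by
    rw [hfx, EReal.coe_lt_coe_iff] at hαx
    rw [hr₀]; linarith
  have hgx : g x = ENNReal.ofReal r₀ := by simp only [hg, hxtop, if_neg, if_false, hr₀]
  set S : Set X := {y | f y ≤ (α : EReal)} with hS
  -- for every τ' > τ we get the bound
  have key : ∀ τ' : ℝ, τ < τ' → EMetric.infEdist x S ≤ ENNReal.ofReal (τ' * r₀) := by
    intro τ' hττ'
    have hτ' : 0 < τ' := hτ.trans hττ'
    set K : ℝ≥0∞ := ENNReal.ofReal (1 / τ') with hK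
    have hK0 : K ≠ 0 := by
      rw [hK]; simp [ENNReal.ofReal_eq_zero, not_le]; positivity
    have hKt : K ≠ ⊤ := ENNReal.ofReal_ne_top
    obtain ⟨y, hy1, hy2⟩ := ekeland_aux g hglsc K hK0 hKt x (by rw [hgx]; exact ENNReal.ofReal_ne_top)
    by_cases hyα : f y ≤ (α : EReal)
    · -- y is in the sublevel set
      have hyS : y ∈ S := hyα
      have hdist : K * edist y x ≤ ENNReal.ofReal r₀ := by
        rw [← hgx]
        exact le_trans (le_add_self.trans hy1) le_rfl
      have hKinv : K⁻¹ = ENNReal.ofReal τ' := by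
        rw [hK, ← ENNReal.ofReal_inv_of_pos (by positivity : (0:ℝ) < 1 / τ')]
        norm_num
      have hedist : edist x y ≤ ENNReal.ofReal (τ' * r₀) := by
        rw [edist_comm]
        calc edist y x = (K⁻¹ * K) * edist y x := by
              rw [ENNReal.inv_mul_cancel hK0 hKt, one_mul]
          _ = K⁻¹ * (K * edist y x) := by ring
          _ ≤ K⁻¹ * ENNReal.ofReal r₀ := by gcongr
          _ = ENNReal.ofReal τ' * ENNReal.ofReal r₀ := by rw [hKinv]
          _ = ENNReal.ofReal (τ' * r₀) := by rw [← ENNReal.ofReal_mul hτ'.le]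
      exact le_trans (EMetric.infEdist_le_edist_of_mem hyS) hedist
    · -- otherwise we find a subgradient of small norm: contradiction
      exfalso
      push_neg at hyα
      have hgy_le : g y ≤ g x := le_trans (self_le_add_right _ _) hy1
      have hyx : f y ≤ f x := by
        have := (hgle y r₀ hr₀pos.le).mp (by rw [← hgx]; exact hgy_le)
        refine this.trans ?_
        rw [hfx, EReal.coe_le_coe_iff]
        rw [hr₀]; linarith
      have hytop : f y ≠ ⊤ := ((hyx.trans_lt hxβ).trans_le le_top).ne
      have hyβ : f y < β := hyx.trans_lt hxβ
      have hfy : f y = (((f y).toReal : ℝ) : EReal) := (EReal.coe_toReal hytop (hbot y)).symm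
      have hgyval : g y = ENNReal.ofReal ((f y).toReal - α) := by
        simp only [hg, hytop, if_neg, if_false]
      -- real form of the Ekeland inequality
      have hek : ∀ z t, f z ≤ ((t + α : ℝ) : EReal) → 0 ≤ t →
          (f y).toReal - α ≤ t + (1 / τ') * ‖z - y‖ := by
        intro z t hzt ht
        have h1 : g y ≤ g z + K * edist z y := hy2 z
        have h2 : g z ≤ ENNReal.ofReal t := by
          rw [hgle z t ht]
          refine hzt.trans ?_
          rw [EReal.coe_le_coe_iff]; linarith
        have h3 : K * edist z y = ENNReal.ofReal ((1 / τ') * ‖z - y‖) := by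
          rw [hK, edist_dist, dist_eq_norm, ← ENNReal.ofReal_mul (by positivity)]
        have h4 : g y ≤ ENNReal.ofReal (t + (1 / τ') * ‖z - y‖) := by
          rw [ENNReal.ofReal_add ht (by positivity), ← h3]
          exact h1.trans (add_le_add h2 le_rfl)
        rw [hgyval] at h4
        have h5 := (ENNReal.ofReal_le_ofReal_iff (by positivity)).mp h4
        linarith
      obtain ⟨u, hu1, hu2⟩ := subgrad_of_ek f hlsc hconv hbot α y hytop hyα (1 / τ')
        (by positivity) hek
      have h6 : ENNReal.ofReal (1 / τ) ≤ (‖u‖₊ : ℝ≥0∞) :=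
        le_trans (hsub y hyα hyβ) (biInf_le _ hu1)
      rw [← enorm_eq_nnnorm, ← ofReal_norm u, ENNReal.ofReal_le_ofReal_iff (norm_nonneg u)] at h6
      have h7 : 1 / τ' < 1 / τ := by
        apply one_div_lt_one_div_of_lt hτ hττ'
      linarith [hu2, h6, h7]
  -- pass to the limit τ' → τ
  have hlim : Tendsto (fun n : ℕ => ENNReal.ofReal ((τ + 1 / (n + 1)) * r₀)) atTop
      (𝓝 (ENNReal.ofReal (τ * r₀))) := by
    apply ENNReal.tendsto_ofReal
    have h1 : Tendsto (fun n : ℕ => τ + 1 / ((n : ℝ) + 1)) atTop (𝓝 (τ + 0)) :=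
      tendsto_const_nhds.add tendsto_one_div_add_atTop_nhds_zero_nat
    rw [add_zero] at h1
    have := h1.mul_const r₀
    simpa using this
  refine ge_of_tendsto' hlim fun n => key (τ + 1 / (n + 1)) ?_
  have : (0:ℝ) < 1 / ((n:ℝ) + 1) := by positivity
  linarith
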